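/- If a path kind P refines a path kind P' (P ⪯_P P'), then every path π in an information flow diagram I that has kind P also has kind P'. -/

import Mathlib

set_option autoImplicit true

section IFCIL

variable {N O S A Pr : Type}

/-- Node patterns: a concrete node or the wildcard `*`. -/
inductive NodePat (N : Type) where
  | star : NodePat N
  | node : N → NodePat N

/-- An arc of an information flow diagram: source, nonempty set of operations, target. -/
abbrev Arc (N O : Type) := N × Set O × N

/-- An information flow diagram `I = (N, ta, E)`. -/
structure IFD (N O : Type) where
  ta : N → Set N
  E : Set (Arc N O)

/-- A node pattern `m` matches a node `n`: `m = *` or `n ∈ ta(m)`. -/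
def NodePat.mat (I : IFD N O) : NodePat N → N → Prop
  | .star, _ => True
  | .node m, n => n ∈ I.ta m

/-- Consecutive arcs have matching endpoints. -/
def Chained : List (Arc N O) → Prop
  | [] => True
  | [_] => True
  | a :: b :: rest => a.2.2 = b.1 ∧ Chained (b :: rest)

/-- A path in `I`: nonempty, chained sequence of arcs of `I`. -/
def PathIn (I : IFD N O) (π : List (Arc N O)) : Prop :=
  π ≠ [] ∧ Chained π ∧ ∀ a ∈ π, a ∈ I.E

/-- Arrows: single step `>` or multi step `+>`. -/
inductive Arrow where
  | single : Arrow
  | multi : Arrow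

/-- Path kinds `P ::= n [o]> n' | n +[o]> n' | P₁ P₂`. -/
inductive Kind (N O : Type) where
  | atom : NodePat N → Arrow → Set O → NodePat N → Kind N O
  | comp : Kind N O → Kind N O → Kind N O

/-- The kind satisfaction relation `π ▷_I P`. -/
inductive KSat (I : IFD N O) : List (Arc N O) → Kind N O → Prop where
  | step : NodePat.mat I m n → NodePat.mat I m' n' → (o ∩ o').Nonempty →
      KSat I [(n, o, n')] (.atom m .single o' m')
  | plusBase : KSat I [(n, o, n')] (.atom m .single o' m') →
      KSat I [(n, o, n')] (.atom m .multi o' m')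
  | plusStep : KSat I [(n, o, n')] (.atom m .single o' .star) →
      KSat I π (.atom .star .multi o' m') →
      KSat I ((n, o, n') :: π) (.atom m .multi o' m')
  | comp : KSat I π₁ P₁ → KSat I π₂ P₂ → KSat I (π₁ ++ π₂) (.comp P₁ P₂)

/-- Node refinement: `n ⪯_n n` and `n ⪯_n *`. -/
def NRef : NodePat N → NodePat N → Prop := fun a b => a = b ∨ b = .star

/-- Arrow refinement: reflexivity and `> ⪯_a +>`. -/
inductive ARef : Arrow → Arrow → Prop where
  | refl (a) : ARef a a
  | up : ARef .single .multi

/-- Kind refinement `⪯_P`: rules (comp), (P-1)–(P-4), closed under reflexivity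
and transitivity. -/
inductive KRef : Kind N O → Kind N O → Prop where
  | refl (P) : KRef P P
  | trans : KRef P Q → KRef Q R → KRef P R
  | comp : KRef P₁ P₁' → KRef P₂ P₂' → KRef (.comp P₁ P₂) (.comp P₁' P₂')
  | atom : NRef n₁ n₁' → NRef n₂ n₂' → ARef w w' → o ⊆ o' →
      KRef (.atom n₁ w o n₂) (.atom n₁' w' o' n₂')
  | p2 : NRef n₁ n₁' → NRef n₂ n₂' → o₁ ⊆ o₁' → o₁ ⊆ o₂' → o₂ ⊆ o₂' →
      KRef (.comp (.atom n₁ .multi o₁ .star) (.atom .star .single o₂ n₂))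
           (.comp (.atom n₁' .single o₁' .star) (.atom .star .multi o₂' n₂'))
  | p3 : NRef n₁ n₁' → NRef n₂ n₂' → o₁ ⊆ o' → o₂ ⊆ o' →
      KRef (.comp (.atom n₁ .multi o₁ .star) (.atom .star .multi o₂ n₂))
           (.atom n₁' .multi o' n₂')
  | p4 : NRef n₁ n₁' → NRef n₂ n₂' → o₁ ⊆ o₁' → o₂ ⊆ o₂' → o₂ ⊆ o₁' →
      KRef (.comp (.atom n₁ .single o₁ .star) (.atom .star .multi o₂ n₂))
           (.comp (.atom n₁' .multi o₁' .star) (.atom .star .single o₂' n₂'))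

/-- IFL requirements `R ::= P | ~P | P : P'`. -/
inductive Req (N O : Type) where
  | ex : Kind N O → Req N O
  | no : Kind N O → Req N O
  | constr : Kind N O → Kind N O → Req N O

/-- Validity `I ⊨ R`. -/
def Valid (I : IFD N O) : Req N O → Prop
  | .ex P => ∃ π, PathIn I π ∧ KSat I π P
  | .no P => ¬ ∃ π, PathIn I π ∧ KSat I π P
  | .constr P P' => ∀ π, PathIn I π → KSat I π P → KSat I π P'

/-- Requirement refinement `⪯`: rules (R-1)–(R-3), closed under
reflexivity and transitivity. -/
inductive RRef : Req N O → Req N O → Prop where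
  | refl (R) : RRef R R
  | trans : RRef R₁ R₂ → RRef R₂ R₃ → RRef R₁ R₃
  | ex : KRef P P' → RRef (.ex P) (.ex P')
  | no : KRef P P' → RRef (.no P') (.no P)
  | constr : KRef P₁ P₁' → KRef P₂ P₂' → RRef (.constr P₁' P₂) (.constr P₁ P₂')

/-- The equivalent, right-linear grammar of kinds:
`P ::= n [o]> n' | n +[o]> n' | (n [o]> n') P | (n +[o]> n') P`. -/
inductive LKind (N O : Type) where
  | step : NodePat N → Set O → NodePat N → LKind N O
  | plus : NodePat N → Set O → NodePat N → LKind N O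
  | stepC : NodePat N → Set O → NodePat N → LKind N O → LKind N O
  | plusC : NodePat N → Set O → NodePat N → LKind N O → LKind N O

/-- Kind satisfaction `π ▷_I P` for the right-linear grammar. -/
inductive LSat (I : IFD N O) : List (Arc N O) → LKind N O → Prop where
  | step : NodePat.mat I m n → NodePat.mat I m' n' → (o ∩ o').Nonempty →
      LSat I [(n, o, n')] (.step m o' m')
  | plusBase : LSat I [(n, o, n')] (.step m o' m') →
      LSat I [(n, o, n')] (.plus m o' m')
  | plusStep : LSat I [(n, o, n')] (.step m o' .star) →
      LSat I π (.plus .star o' m') →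
      LSat I ((n, o, n') :: π) (.plus m o' m')
  | stepC : LSat I [(n, o, n')] (.step m o' .star) → LSat I π P →
      LSat I ((n, o, n') :: π) (.stepC m o' m' P)
  | plusCBase : LSat I π (.stepC m o' m' P) → LSat I π (.plusC m o' m' P)
  | plusCStep : LSat I [(n, o, n')] (.step m o' .star) →
      LSat I π (.plusC .star o' .star P) →
      LSat I ((n, o, n') :: π) (.plusC m o' m' P)

/-- LTL formulas over atomic propositions `Pr` and actions `A`;
`acts o` stands for the disjunction `⋁_{op ∈ o} (op)`. -/
inductive LTL (Pr A : Type) where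
  | tt : LTL Pr A
  | atom : Pr → LTL Pr A
  | acts : Set A → LTL Pr A
  | and : LTL Pr A → LTL Pr A → LTL Pr A
  | or : LTL Pr A → LTL Pr A → LTL Pr A
  | not : LTL Pr A → LTL Pr A
  | next : LTL Pr A → LTL Pr A
  | untl : LTL Pr A → LTL Pr A → LTL Pr A

/-- A finite KTS path: a state followed by a list of (action, state) steps. -/
structure FinPath (S A : Type) where
  first : S
  rest : List (A × S)

/-- Drop the first `k` transitions of a finite path. -/
def FinPath.drop : FinPath S A → ℕ → FinPath S A
  | w, 0 => w
  | ⟨s, []⟩, _ + 1 => ⟨s, []⟩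
  | ⟨_, (_, s') :: r⟩, k + 1 => FinPath.drop ⟨s', r⟩ k

/-- Finite-path LTL semantics `w ⊨_l φ` with labeling `L`. -/
def FSat (L : S → Set Pr) : LTL Pr A → FinPath S A → Prop
  | .tt, _ => True
  | .atom p, w => p ∈ L w.first
  | .acts o, w => ∃ a s r, w.rest = (a, s) :: r ∧ a ∈ o
  | .and φ ψ, w => FSat L φ w ∧ FSat L ψ w
  | .or φ ψ, w => FSat L φ w ∨ FSat L ψ w
  | .not φ, w => ¬ FSat L φ w
  | .next φ, w => ∃ a s r, w.rest = (a, s) :: r ∧ FSat L φ ⟨s, r⟩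
  | .untl φ ψ, w => ∃ k, k ≤ w.rest.length ∧ FSat L ψ (w.drop k) ∧
      ∀ j < k, FSat L φ (w.drop j)

/-- The LTL encoding `enc(P)` of flow kinds (finite-path version,
with end marker `¬X(true)`). -/
def encK : LKind N O → LTL (NodePat N) O
  | .step n o n' =>
      .and (.atom n) (.and (.acts o) (.next (.and (.atom n') (.not (.next .tt)))))
  | .plus n o n' =>
      .and (.atom n) (.and (.acts o)
        (.next (.untl (.acts o) (.and (.atom n') (.not (.next .tt))))))
  | .stepC n o _ P => .and (.atom n) (.and (.acts o) (.next (encK P)))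
  | .plusC n o _ P =>
      .and (.atom n) (.and (.acts o) (.next (.untl (.acts o) (encK P))))

/-- The labeling `Λ` of the KTS of `I`: `M ∈ Λ(n)` iff `n ∈ ta(M)`
(with the wildcard true everywhere). -/
def labelOf (I : IFD N O) : N → Set (NodePat N) :=
  fun n => {p | NodePat.mat I p n}

/-- `encRest π r`: the steps `r` traverse the arcs `π` choosing one
operation from each arc's operation set. -/
def encRest : List (Arc N O) → List (O × N) → Prop
  | [], [] => True
  | (_, o, n') :: π, (op, s) :: r => op ∈ o ∧ s = n' ∧ encRest π r
  | _, _ => False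

/-- `w ∈ enc(π)` : the KTS path `w` results from the diagram path `π`
by choosing one operation from each arc's operation set. -/
def encPath (π : List (Arc N O)) (w : FinPath N O) : Prop :=
  match π with
  | [] => False
  | (n, _, _) :: _ => w.first = n ∧ encRest π w.rest

/-- Auxiliary for `π_w`. -/
def diagOf : N → List (O × N) → List (Arc N O)
  | _, [] => []
  | s, (op, s') :: r => (s, ({op} : Set O), s') :: diagOf s' r

/-- `π_w`: the diagram path obtained from a KTS path by replacing each
action `op` with the singleton `{op}`. -/
def FinPath.toDiagram (w : FinPath N O) : List (Arc N O) := diagOf w.first w.rest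

/-- A transition of the KTS of `I`: `E' = {(n, op, n') | (n,o,n') ∈ E, op ∈ o}`. -/
def ktsStep (I : IFD N O) (s : N) (op : O) (s' : N) : Prop :=
  ∃ o, (s, o, s') ∈ I.E ∧ op ∈ o

def ktsRest (I : IFD N O) : N → List (O × N) → Prop
  | _, [] => True
  | s, (op, s') :: r => ktsStep I s op s' ∧ ktsRest I s' r

/-- `w` is a (finite) path of the KTS of `I`. -/
def KTSPath (I : IFD N O) (w : FinPath N O) : Prop := ktsRest I w.first w.rest

/-- `K ⊨_l φ`: every finite path of the KTS of `I` satisfies `φ`. -/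
def KModels (I : IFD N O) (φ : LTL (NodePat N) O) : Prop :=
  ∀ w, KTSPath I w → FSat (labelOf I) φ w

/-- IFL requirements over right-linear kinds. -/
inductive LReq (N O : Type) where
  | ex : LKind N O → LReq N O
  | no : LKind N O → LReq N O
  | constr : LKind N O → LKind N O → LReq N O

/-- Validity `I ⊨ R` for right-linear requirements. -/
def LValid (I : IFD N O) : LReq N O → Prop
  | .ex P => ∃ π, PathIn I π ∧ LSat I π P
  | .no P => ¬ ∃ π, PathIn I π ∧ LSat I π P
  | .constr P P' => ∀ π, PathIn I π → LSat I π P → LSat I π P'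

/-- Satisfaction `K ⊢ R` in the finite-path KTS semantics. -/
def KEnt (I : IFD N O) : LReq N O → Prop
  | .ex P => ¬ KModels I (.not (encK P))
  | .no P => KModels I (.not (encK P))
  | .constr P P' => KModels I (.or (.not (encK P)) (encK P'))

/-- Infinite KTS paths. -/
structure InfPath (S A : Type) where
  state : ℕ → S
  act : ℕ → A

def InfPath.drop (w : InfPath S A) (k : ℕ) : InfPath S A :=
  ⟨fun i => w.state (i + k), fun i => w.act (i + k)⟩

/-- Infinite-path LTL semantics. -/
def ISat (L : S → Set Pr) : LTL Pr A → InfPath S A → Prop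
  | .tt, _ => True
  | .atom p, w => p ∈ L (w.state 0)
  | .acts o, w => w.act 0 ∈ o
  | .and φ ψ, w => ISat L φ w ∧ ISat L ψ w
  | .or φ ψ, w => ISat L φ w ∨ ISat L ψ w
  | .not φ, w => ¬ ISat L φ w
  | .next φ, w => ISat L φ (w.drop 1)
  | .untl φ ψ, w => ∃ k, ISat L ψ (w.drop k) ∧ ∀ j < k, ISat L φ (w.drop j)

/-- Atomic propositions for the sink-extended KTS: node patterns plus
the distinguished proposition `ι`. -/
abbrev SProp (N : Type) := NodePat N ⊕ Unit

/-- Labeling of the sink-extended KTS: the sink (`none`) is labeled only by `ι`. -/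
def labelι (I : IFD N O) : Option N → Set (SProp N)
  | some n => {p | ∃ q, p = Sum.inl q ∧ NodePat.mat I q n}
  | none => {Sum.inr ()}

/-- The encoding `enc_ι(P)` of flow kinds for the sink-extended KTS:
identical to `enc` except that `¬X(true)` is replaced by `X(ι)`. -/
def encι : LKind N O → LTL (SProp N) O
  | .step n o n' =>
      .and (.atom (.inl n)) (.and (.acts o)
        (.next (.and (.atom (.inl n')) (.next (.atom (.inr ()))))))
  | .plus n o n' =>
      .and (.atom (.inl n)) (.and (.acts o)
        (.next (.untl (.acts o) (.and (.atom (.inl n')) (.next (.atom (.inr ())))))))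
  | .stepC n o _ P => .and (.atom (.inl n)) (.and (.acts o) (.next (encι P)))
  | .plusC n o _ P =>
      .and (.atom (.inl n)) (.and (.acts o) (.next (.untl (.acts o) (encι P))))

/-- The states of a finite path. -/
def FinPath.states (w : FinPath S A) : List S := w.first :: w.rest.map Prod.snd

/-- `w·ι^ω`: the finite path `w` followed by the sink forever
(with arbitrary operation labels `ops` into `ι`). -/
def appendSink (w : FinPath N O) (ops : ℕ → O) : InfPath (Option N) O where
  state := fun i => w.states[i]?
  act := fun i => if h : i < w.rest.length then (w.rest.get ⟨i, h⟩).1 else ops i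

/-- Transitions of the sink-extended KTS `K_ι`: the transitions of `K`,
transitions from every state to the sink with every operation, and the
self-loop on the sink. -/
def sinkStep (I : IFD N O) : Option N → O → Option N → Prop
  | some s, op, some s' => ktsStep I s op s'
  | _, _, none => True
  | none, _, some _ => False

/-- `w` is an infinite path of the sink-extended KTS `K_ι`. -/
def KιPath (I : IFD N O) (w : InfPath (Option N) O) : Prop :=
  ∀ i, sinkStep I (w.state i) (w.act i) (w.state (i + 1))

/-- `K_ι ⊨_l φ`: every infinite path of `K_ι` satisfies `φ`. -/
def KιModels (I : IFD N O) (φ : LTL (SProp N) O) : Prop :=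
  ∀ w, KιPath I w → ISat (labelι I) φ w

/-- Satisfaction `K_ι ⊢ R` in the infinite-path, sink-extended semantics. -/
def KιEnt (I : IFD N O) : LReq N O → Prop
  | .ex P => ¬ KιModels I (.not (encι P))
  | .no P => KιModels I (.not (encι P))
  | .constr P P' => KιModels I (.or (.not (encι P)) (encι P'))

/-- The leading node constraint of a kind. -/
def LKind.firstNode : LKind N O → NodePat N
  | .step n _ _ => n
  | .plus n _ _ => n
  | .stepC n _ _ _ => n
  | .plusC n _ _ _ => n

/-- The leading operation set of a kind. -/
def LKind.firstOps : LKind N O → Set O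
  | .step _ o _ => o
  | .plus _ o _ => o
  | .stepC _ o _ _ => o
  | .plusC _ o _ _ => o

end IFCIL

section AuxRef
variable {N O : Type}

lemma mat_mono {I : IFD N O} {m m' : NodePat N} (h : NRef m m') {n : N} :
    NodePat.mat I m n → NodePat.mat I m' n := by
  rcases h with rfl | rfl
  · exact id
  · intro _; trivial

lemma getLast?_cons_ne {α : Type*} {a : α} {l : List α} (h : l ≠ []) :
    (a :: l).getLast? = l.getLast? := by
  rw [show a :: l = [a] ++ l from rfl, List.getLast?_append_of_ne_nil _ h]

lemma ksat_single_elim {I : IFD N O} {π : List (Arc N O)} {m o m'}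
    (h : KSat I π (.atom m .single o m')) :
    ∃ n o₀ n', π = [(n, o₀, n')] ∧ NodePat.mat I m n ∧ NodePat.mat I m' n' ∧
      (o₀ ∩ o).Nonempty := by
  cases h with
  | step h1 h2 h3 => exact ⟨_, _, _, rfl, h1, h2, h3⟩

lemma inter_mono {o₀ o o' : Set O} (ho : o ⊆ o') (h : (o₀ ∩ o).Nonempty) :
    (o₀ ∩ o').Nonempty :=
  ⟨h.choose, h.choose_spec.1, ho h.choose_spec.2⟩

/-- Monotonicity of atom satisfaction under pattern/operation refinement. -/
lemma ksat_atom_mono {I : IFD N O} {π : List (Arc N O)} {P : Kind N O}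
    (h : KSat I π P) : ∀ m a o m' m₂ m₂' o₂, P = Kind.atom m a o m' →
      NRef m m₂ → NRef m' m₂' → o ⊆ o₂ → KSat I π (.atom m₂ a o₂ m₂') := by
  induction h with
  | step h1 h2 h3 =>
      rintro m a o m' m₂ m₂' o₂ he hn hn' ho
      injection he with e1 e2 e3 e4
      subst e1; subst e2; subst e3; subst e4
      exact .step (mat_mono hn h1) (mat_mono hn' h2) (inter_mono ho h3)
  | plusBase h ih =>
      rintro m a o m' m₂ m₂' o₂ he hn hn' ho
      injection he with e1 e2 e3 e4
      subst e1; subst e2; subst e3; subst e4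
      exact .plusBase (ih _ _ _ _ _ _ _ rfl hn hn' ho)
  | plusStep h1 h2 ih1 ih2 =>
      rintro m a o m' m₂ m₂' o₂ he hn hn' ho
      injection he with e1 e2 e3 e4
      subst e1; subst e2; subst e3; subst e4
      exact .plusStep (ih1 _ _ _ _ _ _ _ rfl hn (Or.inl rfl) ho)
        (ih2 _ _ _ _ _ _ _ rfl (Or.inl rfl) hn' ho)
  | comp _ _ _ _ => rintro _ _ _ _ _ _ _ he; cases he

/-- Characterization of multi satisfaction. -/
def MultiChar (I : IFD N O) (m : NodePat N) (o : Set O) (m' : NodePat N)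
    (π : List (Arc N O)) : Prop :=
  π ≠ [] ∧ (∀ b ∈ π, (b.2.1 ∩ o).Nonempty) ∧
    (∀ a, π.head? = some a → NodePat.mat I m a.1) ∧
    (∀ a, π.getLast? = some a → NodePat.mat I m' a.2.2)

lemma ksat_multi_char {I : IFD N O} {π : List (Arc N O)} {P : Kind N O}
    (h : KSat I π P) : ∀ m o m', P = .atom m .multi o m' → MultiChar I m o m' π := by
  induction h with
  | step _ _ _ => intro _ _ _ h; cases h
  | plusBase h ih =>
      intro m o m' he; cases he
      obtain ⟨n, o₀, n', he, h1, h2, h3⟩ := ksat_single_elim h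
      cases he
      refine ⟨by simp, ?_, ?_, ?_⟩
      · intro b hb; simp at hb; subst hb; exact h3
      · intro a ha; simp at ha; subst ha; exact h1
      · intro a ha; simp at ha; subst ha; exact h2
  | plusStep h1 _ _ ih₂ =>
      intro m o m' he; cases he
      obtain ⟨n, o₀, n', he, hm1, _, h3⟩ := ksat_single_elim h1
      injection he with e1 e2
      cases e1; cases e2
      obtain ⟨hne, hops, hhd, hlast⟩ := ih₂ _ _ _ rfl
      refine ⟨by simp, ?_, ?_, ?_⟩
      · intro b hb
        rcases List.mem_cons.1 hb with rfl | hb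
        · exact h3
        · exact hops _ hb
      · intro a ha; simp at ha; subst ha; exact hm1
      · intro a ha
        rw [getLast?_cons_ne hne] at ha
        exact hlast _ ha
  | comp _ _ _ _ => intro _ _ _ h; cases h

lemma multi_char_ksat {I : IFD N O} {o : Set O} {m' : NodePat N} :
    ∀ (π : List (Arc N O)) (m : NodePat N), MultiChar I m o m' π →
      KSat I π (.atom m .multi o m') := by
  intro π
  induction π with
  | nil => intro m h; exact absurd rfl h.1
  | cons a π ih =>
      rintro m ⟨-, hops, hhd, hlast⟩
      obtain ⟨n, o₀, n'⟩ := a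
      cases π with
      | nil =>
          exact .plusBase (.step (hhd _ rfl) (hlast _ rfl)
            (hops _ (List.mem_cons_self)))
      | cons b π' =>
          refine .plusStep (.step (hhd _ rfl) trivial
            (hops _ (List.mem_cons_self))) ?_
          refine ih _ ⟨by simp, fun c hc => hops c (by simp [hc]),
            fun c _ => trivial, ?_⟩
          intro c hc
          apply hlast
          rw [getLast?_cons_ne (by simp)]
          exact hc

lemma ksat_refine {I : IFD N O} {P P' : Kind N O} (href : KRef P P') :
    ∀ π, KSat I π P → KSat I π P' := by
  induction href with
  | refl P => exact fun _ => id
  | trans _ _ ih1 ih2 => exact fun π h => ih2 _ (ih1 _ h)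
  | comp _ _ ih1 ih2 =>
      intro π h
      cases h with
      | comp h1 h2 => exact .comp (ih1 _ h1) (ih2 _ h2)
  | atom hn1 hn2 hw ho =>
      intro π h
      cases hw with
      | refl _ => exact ksat_atom_mono h _ _ _ _ _ _ _ rfl hn1 hn2 ho
      | up =>
          obtain ⟨n, o₀, n', rfl, h1, h2, h3⟩ := ksat_single_elim h
          exact .plusBase (.step (mat_mono hn1 h1) (mat_mono hn2 h2)
            (inter_mono ho h3))
  | p2 hn1 hn2 h11 h12 h22 =>
      intro π h
      cases h with
      | comp h1 h2 =>
          obtain ⟨hne, hops, hhd, hlast⟩ := ksat_multi_char h1 _ _ _ rfl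
          obtain ⟨n, o₀, n', rfl, hm1, hm2, h3⟩ := ksat_single_elim h2
          obtain ⟨a, π₁', rfl⟩ := List.exists_cons_of_ne_nil hne
          obtain ⟨na, oa, na'⟩ := a
          rw [show ((na, oa, na') :: π₁') ++ [(n, o₀, n')]
              = [(na, oa, na')] ++ (π₁' ++ [(n, o₀, n')]) by simp]
          refine .comp (.step (mat_mono hn1 (hhd _ rfl)) trivial
            (inter_mono h11 (hops _ (List.mem_cons_self)))) ?_
          refine multi_char_ksat _ _ ⟨by simp, ?_, fun _ _ => trivial, ?_⟩
          · intro b hb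
            rcases List.mem_append.1 hb with hb | hb
            · exact inter_mono h12 (hops b (by simp [hb]))
            · simp at hb; subst hb
              exact inter_mono h22 h3
          · intro c hc
            rw [List.getLast?_append_of_ne_nil _ (by simp)] at hc
            simp at hc; subst hc
            exact mat_mono hn2 hm2
  | p3 hn1 hn2 h1o h2o =>
      intro π h
      cases h with
      | comp h1 h2 =>
          obtain ⟨hne1, hops1, hhd1, hlast1⟩ := ksat_multi_char h1 _ _ _ rfl
          obtain ⟨hne2, hops2, hhd2, hlast2⟩ := ksat_multi_char h2 _ _ _ rfl
          refine multi_char_ksat _ _ ⟨by simp [hne1], ?_, ?_, ?_⟩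
          · intro b hb
            rcases List.mem_append.1 hb with hb | hb
            · exact inter_mono h1o (hops1 b hb)
            · exact inter_mono h2o (hops2 b hb)
          · intro a ha
            rw [List.head?_append_of_ne_nil _ hne1] at ha
            exact mat_mono hn1 (hhd1 _ ha)
          · intro a ha
            rw [List.getLast?_append_of_ne_nil _ hne2] at ha
            exact mat_mono hn2 (hlast2 _ ha)
  | p4 hn1 hn2 h11 h22 h21 =>
      intro π h
      cases h with
      | @comp π₁ P₁ π₂ P₂ h1 h2 =>
          obtain ⟨n, o₀, n', rfl, hm1, _, h3⟩ := ksat_single_elim h1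
          obtain ⟨hne2, hops2, hhd2, hlast2⟩ := ksat_multi_char h2 _ _ _ rfl
          rcases List.eq_nil_or_concat π₂ with rfl | ⟨π₂', b, rfl⟩
          · exact absurd rfl hne2
          · simp only [List.concat_eq_append] at hne2 hops2 hhd2 hlast2 ⊢
            rw [show [(n, o₀, n')] ++ (π₂' ++ [b])
                = ((n, o₀, n') :: π₂') ++ [b] by simp]
            refine .comp ?_ ?_
            · refine multi_char_ksat _ _ ⟨by simp, ?_, ?_, fun _ _ => trivial⟩
              · intro c hc
                rcases List.mem_cons.1 hc with rfl | hc
                · exact inter_mono h11 h3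
                · exact inter_mono h21 (hops2 c (by simp [hc]))
              · intro c hc; simp at hc; subst hc; exact mat_mono hn1 hm1
            · obtain ⟨nb, ob, nb'⟩ := b
              refine .step trivial ?_ ?_
              · exact mat_mono hn2 (hlast2 _ (by
                  rw [List.getLast?_append_of_ne_nil _ (by simp)]; rfl))
              · exact inter_mono h22 (hops2 (nb, ob, nb') (by simp))

end AuxRef

/-- If a path kind `P` refines a path kind `P'` (`P ⪯_P P'`),
then every path `π` in an information flow diagram `I` that has kind `P`
also has kind `P'`. -/
theorem kind_refinement {N O : Type} (I : IFD N O) (P P' : Kind N O)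
    (href : KRef P P') (π : List (Arc N O)) (hπ : PathIn I π)
    (hsat : KSat I π P) : KSat I π P' :=
  ksat_refine href π hsat
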